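/- For every nonzero real number a and every (x,y) ∈ ℝ², the map L̃ of Theorem 7.1 satisfies ⟨∂L̃/∂x, ∂L̃/∂x⟩ = 0, ⟨∂L̃/∂y, ∂L̃/∂y⟩ = 0, and ⟨∂L̃/∂x, ∂L̃/∂y⟩ = −1; that is, the induced metric of L̃ is the flat Lorentzian metric −dx⊗dy − dy⊗dx. -/

import Mathlib

open Complex

/-- The index-two Hermitian form
`b(z,w) = −conj z₁ · w₁ − conj z₂ · w₂ + conj z₃ · w₃` on `ℂ³`, over which the
pseudo-hyperbolic space `H⁵₂(−1) = {z : b(z,z) = −1}` and the Hopf fibration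
`π : H⁵₂(−1) → CH²₁(−4)` are defined. -/
noncomputable def bHyp (z w : ℂ × ℂ × ℂ) : ℂ :=
  -(starRingEnd ℂ z.1) * w.1 - (starRingEnd ℂ z.2.1) * w.2.1
    + (starRingEnd ℂ z.2.2) * w.2.2

/-- The horizontal lift `L̃ : ℝ² → ℂ³` of Theorem 7.1. -/
noncomputable def Lch (a x y : ℝ) : ℂ × ℂ × ℂ :=
  ((1 / Real.sqrt 3 : ℝ) : ℂ) •
    (((Real.sqrt 2 : ℝ) : ℂ) * Complex.exp (-(Complex.I * ((x + a ^ 2 * y : ℝ) : ℂ)) / (2 * (a : ℂ)))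
        * ((Real.cosh (Real.sqrt 3 * (x - a ^ 2 * y) / (2 * a)) : ℝ) : ℂ),
     Complex.exp (Complex.I * ((a * y + x / a : ℝ) : ℂ)),
     ((Real.sqrt 2 : ℝ) : ℂ) * Complex.exp (-(Complex.I * ((x + a ^ 2 * y : ℝ) : ℂ)) / (2 * (a : ℂ)))
        * ((Real.sinh (Real.sqrt 3 * (x - a ^ 2 * y) / (2 * a)) : ℝ) : ℂ))

private lemma hde (c d : ℂ) (t : ℝ) :
    HasDerivAt (fun t : ℝ => Complex.exp (c * t + d)) (c * Complex.exp (c * t + d)) t := by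
  have h : HasDerivAt (fun t : ℝ => c * (t:ℂ) + d) c t := by
    simpa using ((Complex.ofRealCLM.hasDerivAt (x := t)).const_mul c).add_const d
  simpa [mul_comm] using h.cexp

private lemma hdcoshC (r s t : ℝ) :
    HasDerivAt (fun t : ℝ => ((Real.cosh (r*t+s) : ℝ) : ℂ)) (((r : ℂ)) * ((Real.sinh (r*t+s) : ℝ) : ℂ)) t := by
  have h : HasDerivAt (fun t : ℝ => Real.cosh (r*t+s)) (r * Real.sinh (r*t+s)) t := by
    simpa [mul_comm] using (((hasDerivAt_id t).const_mul r).add_const s).cosh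
  simpa using h.ofReal_comp

private lemma hdsinhC (r s t : ℝ) :
    HasDerivAt (fun t : ℝ => ((Real.sinh (r*t+s) : ℝ) : ℂ)) (((r : ℂ)) * ((Real.cosh (r*t+s) : ℝ) : ℂ)) t := by
  have h : HasDerivAt (fun t : ℝ => Real.sinh (r*t+s)) (r * Real.cosh (r*t+s)) t := by
    simpa [mul_comm] using (((hasDerivAt_id t).const_mul r).add_const s).sinh
  simpa using h.ofReal_comp

private lemma hdC (K c d : ℂ) (r s t : ℝ) :
    HasDerivAt (fun t : ℝ => K * (Complex.exp (c * t + d) * ((Real.cosh (r*t+s):ℝ):ℂ)))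
      (K * (Complex.exp (c * t + d) *
        (c * ((Real.cosh (r*t+s):ℝ):ℂ) + (r:ℂ) * ((Real.sinh (r*t+s):ℝ):ℂ)))) t := by
  have h := ((hde c d t).mul (hdcoshC r s t)).const_mul K
  exact h.congr_deriv (by ring)

private lemma hdS (K c d : ℂ) (r s t : ℝ) :
    HasDerivAt (fun t : ℝ => K * (Complex.exp (c * t + d) * ((Real.sinh (r*t+s):ℝ):ℂ)))
      (K * (Complex.exp (c * t + d) *
        (c * ((Real.sinh (r*t+s):ℝ):ℂ) + (r:ℂ) * ((Real.cosh (r*t+s):ℝ):ℂ)))) t := by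
  have h := ((hde c d t).mul (hdsinhC r s t)).const_mul K
  exact h.congr_deriv (by ring)

private lemma hdslice (k K1 c1 d1 c2 d2 : ℂ) (r s t : ℝ) :
    HasDerivAt (fun t : ℝ => k •
      ((K1 * (Complex.exp (c1 * t + d1) * ((Real.cosh (r*t+s):ℝ):ℂ)),
        Complex.exp (c2 * t + d2),
        K1 * (Complex.exp (c1 * t + d1) * ((Real.sinh (r*t+s):ℝ):ℂ))) : ℂ × ℂ × ℂ))
      (k • ((K1 * (Complex.exp (c1 * t + d1) *
              (c1 * ((Real.cosh (r*t+s):ℝ):ℂ) + (r:ℂ) * ((Real.sinh (r*t+s):ℝ):ℂ))),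
        c2 * Complex.exp (c2 * t + d2),
        K1 * (Complex.exp (c1 * t + d1) *
              (c1 * ((Real.sinh (r*t+s):ℝ):ℂ) + (r:ℂ) * ((Real.cosh (r*t+s):ℝ):ℂ)))) : ℂ × ℂ × ℂ)) t :=
  (((hdC K1 c1 d1 r s t).prodMk ((hde c2 d2 t).prodMk (hdS K1 c1 d1 r s t)))).const_smul k

private lemma key_xx (c k r2 r3 cp sp cq sq C S : ℝ)
    (hr3 : r3 ^ 2 = 3) (hr2 : r2 ^ 2 = 2)
    (hp : cp^2 + sp^2 = 1) (hq : cq^2 + sq^2 = 1) (hu : C^2 - S^2 = 1) :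
    (bHyp
      (((k:ℝ):ℂ) • ((((r2:ℝ):ℂ) * ((((cp:ℝ):ℂ) + ((sp:ℝ):ℂ)*I) * ((((-c):ℝ):ℂ) * I * ((C:ℝ):ℂ) + (((r3*c):ℝ):ℂ) * ((S:ℝ):ℂ))),
        (((2*c:ℝ):ℂ) * I) * (((cq:ℝ):ℂ) + ((sq:ℝ):ℂ)*I),
        ((r2:ℝ):ℂ) * ((((cp:ℝ):ℂ) + ((sp:ℝ):ℂ)*I) * ((((-c):ℝ):ℂ) * I * ((S:ℝ):ℂ) + (((r3*c):ℝ):ℂ) * ((C:ℝ):ℂ)))) : ℂ × ℂ × ℂ))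
      (((k:ℝ):ℂ) • ((((r2:ℝ):ℂ) * ((((cp:ℝ):ℂ) + ((sp:ℝ):ℂ)*I) * ((((-c):ℝ):ℂ) * I * ((C:ℝ):ℂ) + (((r3*c):ℝ):ℂ) * ((S:ℝ):ℂ))),
        (((2*c:ℝ):ℂ) * I) * (((cq:ℝ):ℂ) + ((sq:ℝ):ℂ)*I),
        ((r2:ℝ):ℂ) * ((((cp:ℝ):ℂ) + ((sp:ℝ):ℂ)*I) * ((((-c):ℝ):ℂ) * I * ((S:ℝ):ℂ) + (((r3*c):ℝ):ℂ) * ((C:ℝ):ℂ)))) : ℂ × ℂ × ℂ))).re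
      = 0 := by
  simp only [bHyp, Prod.smul_mk, smul_eq_mul]
  simp only [map_mul, map_add, map_neg, Complex.conj_ofReal, Complex.conj_I]
  simp only [Complex.mul_re, Complex.mul_im, Complex.add_re, Complex.add_im, Complex.sub_re,
    Complex.sub_im, Complex.neg_re, Complex.neg_im, Complex.ofReal_re, Complex.ofReal_im,
    Complex.I_re, Complex.I_im]
  ring_nf
  linear_combination (k^2*c^2*(C^2-S^2)*(cp^2+sp^2)*(r3^2-1))*hr2 + (2*k^2*c^2*(C^2-S^2)*(cp^2+sp^2))*hr3 + (4*k^2*c^2*(C^2-S^2))*hp + (4*k^2*c^2)*hu + (-4*k^2*c^2)*hq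

private lemma key_yy (a k r2 r3 cp sp cq sq C S : ℝ)
    (hr3 : r3 ^ 2 = 3) (hr2 : r2 ^ 2 = 2)
    (hp : cp^2 + sp^2 = 1) (hq : cq^2 + sq^2 = 1) (hu : C^2 - S^2 = 1) :
    (bHyp
      (((k:ℝ):ℂ) • ((((r2:ℝ):ℂ) * ((((cp:ℝ):ℂ) + ((sp:ℝ):ℂ)*I) * ((((-(a/2)):ℝ):ℂ) * I * ((C:ℝ):ℂ) + (((-(r3*a/2)):ℝ):ℂ) * ((S:ℝ):ℂ))),
        (((a:ℝ):ℂ) * I) * (((cq:ℝ):ℂ) + ((sq:ℝ):ℂ)*I),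
        ((r2:ℝ):ℂ) * ((((cp:ℝ):ℂ) + ((sp:ℝ):ℂ)*I) * ((((-(a/2)):ℝ):ℂ) * I * ((S:ℝ):ℂ) + (((-(r3*a/2)):ℝ):ℂ) * ((C:ℝ):ℂ)))) : ℂ × ℂ × ℂ))
      (((k:ℝ):ℂ) • ((((r2:ℝ):ℂ) * ((((cp:ℝ):ℂ) + ((sp:ℝ):ℂ)*I) * ((((-(a/2)):ℝ):ℂ) * I * ((C:ℝ):ℂ) + (((-(r3*a/2)):ℝ):ℂ) * ((S:ℝ):ℂ))),
        (((a:ℝ):ℂ) * I) * (((cq:ℝ):ℂ) + ((sq:ℝ):ℂ)*I),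
        ((r2:ℝ):ℂ) * ((((cp:ℝ):ℂ) + ((sp:ℝ):ℂ)*I) * ((((-(a/2)):ℝ):ℂ) * I * ((S:ℝ):ℂ) + (((-(r3*a/2)):ℝ):ℂ) * ((C:ℝ):ℂ)))) : ℂ × ℂ × ℂ))).re
      = 0 := by
  simp only [bHyp, Prod.smul_mk, smul_eq_mul]
  simp only [map_mul, map_add, map_neg, Complex.conj_ofReal, Complex.conj_I]
  simp only [Complex.mul_re, Complex.mul_im, Complex.add_re, Complex.add_im, Complex.sub_re,
    Complex.sub_im, Complex.neg_re, Complex.neg_im, Complex.ofReal_re, Complex.ofReal_im,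
    Complex.I_re, Complex.I_im]
  ring_nf
  linear_combination (k^2*(a^2/4)*(C^2-S^2)*(cp^2+sp^2)*(r3^2-1))*hr2 + (k^2*a^2*(C^2-S^2)*(cp^2+sp^2)/2)*hr3 + (k^2*a^2*(C^2-S^2))*hp + (k^2*a^2)*hu + (-(k^2*a^2))*hq

private lemma key_xy (a c k r2 r3 cp sp cq sq C S : ℝ)
    (hr3 : r3 ^ 2 = 3) (hr2 : r2 ^ 2 = 2) (hca : c * a = 1/2) (hk : k * r3 = 1)
    (hp : cp^2 + sp^2 = 1) (hq : cq^2 + sq^2 = 1) (hu : C^2 - S^2 = 1) :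
    (bHyp
      (((k:ℝ):ℂ) • ((((r2:ℝ):ℂ) * ((((cp:ℝ):ℂ) + ((sp:ℝ):ℂ)*I) * ((((-c):ℝ):ℂ) * I * ((C:ℝ):ℂ) + (((r3*c):ℝ):ℂ) * ((S:ℝ):ℂ))),
        (((2*c:ℝ):ℂ) * I) * (((cq:ℝ):ℂ) + ((sq:ℝ):ℂ)*I),
        ((r2:ℝ):ℂ) * ((((cp:ℝ):ℂ) + ((sp:ℝ):ℂ)*I) * ((((-c):ℝ):ℂ) * I * ((S:ℝ):ℂ) + (((r3*c):ℝ):ℂ) * ((C:ℝ):ℂ)))) : ℂ × ℂ × ℂ))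
      (((k:ℝ):ℂ) • ((((r2:ℝ):ℂ) * ((((cp:ℝ):ℂ) + ((sp:ℝ):ℂ)*I) * ((((-(a/2)):ℝ):ℂ) * I * ((C:ℝ):ℂ) + (((-(r3*a/2)):ℝ):ℂ) * ((S:ℝ):ℂ))),
        (((a:ℝ):ℂ) * I) * (((cq:ℝ):ℂ) + ((sq:ℝ):ℂ)*I),
        ((r2:ℝ):ℂ) * ((((cp:ℝ):ℂ) + ((sp:ℝ):ℂ)*I) * ((((-(a/2)):ℝ):ℂ) * I * ((S:ℝ):ℂ) + (((-(r3*a/2)):ℝ):ℂ) * ((C:ℝ):ℂ)))) : ℂ × ℂ × ℂ))).re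
      = -1 := by
  simp only [bHyp, Prod.smul_mk, smul_eq_mul]
  simp only [map_mul, map_add, map_neg, Complex.conj_ofReal, Complex.conj_I]
  simp only [Complex.mul_re, Complex.mul_im, Complex.add_re, Complex.add_im, Complex.sub_re,
    Complex.sub_im, Complex.neg_re, Complex.neg_im, Complex.ofReal_re, Complex.ofReal_im,
    Complex.I_re, Complex.I_im]
  ring_nf
  linear_combination (-(k^2)*(c*a/2)*(cp^2+sp^2)*(r3^2+1)*(C^2-S^2))*hr2 + (-(k^2)*c*a*(cp^2+sp^2)*(C^2-S^2) + k^2)*hr3 + (-4*k^2*c*a*(C^2-S^2))*hp + (-4*k^2*c*a)*hu + (-2*c*a*k^2)*hq + (-6*k^2)*hca + (-(k*r3+1))*hk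

/-- Theorem 7.1: the induced metric of `L̃` is the flat Lorentzian metric
`−dx⊗dy − dy⊗dx`. -/
theorem Lch_induced_metric (a : ℝ) (ha : a ≠ 0) :
    ∀ x y : ℝ,
      (bHyp (deriv (fun t => Lch a t y) x) (deriv (fun t => Lch a t y) x)).re = 0 ∧
      (bHyp (deriv (fun t => Lch a x t) y) (deriv (fun t => Lch a x t) y)).re = 0 ∧
      (bHyp (deriv (fun t => Lch a t y) x) (deriv (fun t => Lch a x t) y)).re = -1 := by
  intro x y
  have haC : (a:ℂ) ≠ 0 := Complex.ofReal_ne_zero.mpr ha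
  -- normal form of the x-slice
  have hfx : (fun t => Lch a t y) = fun t : ℝ =>
      ((1 / Real.sqrt 3 : ℝ) : ℂ) •
      ((((Real.sqrt 2:ℝ):ℂ) * (Complex.exp ((((-(1/(2*a))):ℝ):ℂ) * Complex.I * t + (((-(a^2*y/(2*a))):ℝ):ℂ) * Complex.I) *
          ((Real.cosh (Real.sqrt 3*(1/(2*a))*t + (-(Real.sqrt 3*a^2*y/(2*a)))):ℝ):ℂ)),
        Complex.exp ((((2*(1/(2*a)):ℝ)):ℂ) * Complex.I * t + (((a*y:ℝ)):ℂ) * Complex.I),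
        ((Real.sqrt 2:ℝ):ℂ) * (Complex.exp ((((-(1/(2*a))):ℝ):ℂ) * Complex.I * t + (((-(a^2*y/(2*a))):ℝ):ℂ) * Complex.I) *
          ((Real.sinh (Real.sqrt 3*(1/(2*a))*t + (-(Real.sqrt 3*a^2*y/(2*a)))):ℝ):ℂ))) : ℂ × ℂ × ℂ) := by
    funext t
    have e1 : -(Complex.I * ((t + a ^ 2 * y : ℝ) : ℂ)) / (2 * (a : ℂ)) =
        (((-(1/(2*a))):ℝ):ℂ) * Complex.I * t + (((-(a^2*y/(2*a))):ℝ):ℂ) * Complex.I := by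
      push_cast
      field_simp
      ring
    have e2 : Complex.I * ((a * y + t / a : ℝ) : ℂ) =
        (((2*(1/(2*a)):ℝ)):ℂ) * Complex.I * t + (((a*y:ℝ)):ℂ) * Complex.I := by
      push_cast
      field_simp
      ring
    have e3 : Real.sqrt 3 * (t - a^2*y)/(2*a) = Real.sqrt 3*(1/(2*a))*t + (-(Real.sqrt 3*a^2*y/(2*a))) := by
      ring
    simp only [Lch, e1, e2, e3, mul_assoc]
  -- normal form of the y-slice
  have hfy : (fun t => Lch a x t) = fun t : ℝ =>
      ((1 / Real.sqrt 3 : ℝ) : ℂ) •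
      ((((Real.sqrt 2:ℝ):ℂ) * (Complex.exp ((((-(a/2)):ℝ):ℂ) * Complex.I * t + (((-(x/(2*a))):ℝ):ℂ) * Complex.I) *
          ((Real.cosh ((-(Real.sqrt 3*a/2))*t + (Real.sqrt 3*x/(2*a))):ℝ):ℂ)),
        Complex.exp (((a:ℝ):ℂ) * Complex.I * t + (((x/a:ℝ)):ℂ) * Complex.I),
        ((Real.sqrt 2:ℝ):ℂ) * (Complex.exp ((((-(a/2)):ℝ):ℂ) * Complex.I * t + (((-(x/(2*a))):ℝ):ℂ) * Complex.I) *
          ((Real.sinh ((-(Real.sqrt 3*a/2))*t + (Real.sqrt 3*x/(2*a))):ℝ):ℂ))) : ℂ × ℂ × ℂ) := by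
    funext t
    have e1 : -(Complex.I * ((x + a ^ 2 * t : ℝ) : ℂ)) / (2 * (a : ℂ)) =
        (((-(a/2)):ℝ):ℂ) * Complex.I * t + (((-(x/(2*a))):ℝ):ℂ) * Complex.I := by
      push_cast
      field_simp
      ring
    have e2 : Complex.I * ((a * t + x / a : ℝ) : ℂ) =
        ((a:ℝ):ℂ) * Complex.I * t + (((x/a:ℝ)):ℂ) * Complex.I := by
      push_cast
      field_simp
    have e3 : Real.sqrt 3 * (x - a^2*t)/(2*a) = (-(Real.sqrt 3*a/2))*t + (Real.sqrt 3*x/(2*a)) := by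
      field_simp
      ring
    simp only [Lch, e1, e2, e3, mul_assoc]
  -- the derivatives
  have hdx := (hfx ▸ hdslice ((1 / Real.sqrt 3 : ℝ) : ℂ) ((Real.sqrt 2:ℝ):ℂ)
      ((((-(1/(2*a))):ℝ):ℂ) * Complex.I) ((((-(a^2*y/(2*a))):ℝ):ℂ) * Complex.I)
      ((((2*(1/(2*a)):ℝ)):ℂ) * Complex.I) ((((a*y:ℝ)):ℂ) * Complex.I)
      (Real.sqrt 3*(1/(2*a))) (-(Real.sqrt 3*a^2*y/(2*a))) x).deriv
  have hdy := (hfy ▸ hdslice ((1 / Real.sqrt 3 : ℝ) : ℂ) ((Real.sqrt 2:ℝ):ℂ)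
      ((((-(a/2)):ℝ):ℂ) * Complex.I) ((((-(x/(2*a))):ℝ):ℂ) * Complex.I)
      (((a:ℝ):ℂ) * Complex.I) ((((x/a:ℝ)):ℂ) * Complex.I)
      (-(Real.sqrt 3*a/2)) (Real.sqrt 3*x/(2*a)) y).deriv
  -- the common phases
  set p : ℝ := -(1/(2*a))*x + -(a^2*y/(2*a)) with hpdef
  set q : ℝ := 2*(1/(2*a))*x + a*y with hqdef
  set u : ℝ := Real.sqrt 3*(1/(2*a))*x + -(Real.sqrt 3*a^2*y/(2*a)) with hudef
  -- rewrite the exponentials in terms of cos/sin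
  have hEp : Complex.exp ((((-(1/(2*a))):ℝ):ℂ) * Complex.I * (x:ℝ) + (((-(a^2*y/(2*a))):ℝ):ℂ) * Complex.I)
      = ((Real.cos p :ℝ):ℂ) + ((Real.sin p :ℝ):ℂ) * Complex.I := by
    rw [show (((-(1/(2*a))):ℝ):ℂ) * Complex.I * (x:ℝ) + (((-(a^2*y/(2*a))):ℝ):ℂ) * Complex.I
        = ((p:ℝ):ℂ) * Complex.I by rw [hpdef]; push_cast; ring]
    rw [Complex.exp_mul_I, ← Complex.ofReal_cos, ← Complex.ofReal_sin]
  have hEq : Complex.exp ((((2*(1/(2*a)):ℝ)):ℂ) * Complex.I * (x:ℝ) + (((a*y:ℝ)):ℂ) * Complex.I)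
      = ((Real.cos q :ℝ):ℂ) + ((Real.sin q :ℝ):ℂ) * Complex.I := by
    rw [show (((2*(1/(2*a)):ℝ)):ℂ) * Complex.I * (x:ℝ) + (((a*y:ℝ)):ℂ) * Complex.I
        = ((q:ℝ):ℂ) * Complex.I by rw [hqdef]; push_cast; ring]
    rw [Complex.exp_mul_I, ← Complex.ofReal_cos, ← Complex.ofReal_sin]
  have hEp' : Complex.exp ((((-(a/2)):ℝ):ℂ) * Complex.I * (y:ℝ) + (((-(x/(2*a))):ℝ):ℂ) * Complex.I)
      = ((Real.cos p :ℝ):ℂ) + ((Real.sin p :ℝ):ℂ) * Complex.I := by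
    rw [show (((-(a/2)):ℝ):ℂ) * Complex.I * (y:ℝ) + (((-(x/(2*a))):ℝ):ℂ) * Complex.I
        = ((p:ℝ):ℂ) * Complex.I by rw [hpdef]; push_cast; field_simp; ring]
    rw [Complex.exp_mul_I, ← Complex.ofReal_cos, ← Complex.ofReal_sin]
  have hEq' : Complex.exp (((a:ℝ):ℂ) * Complex.I * (y:ℝ) + (((x/a:ℝ)):ℂ) * Complex.I)
      = ((Real.cos q :ℝ):ℂ) + ((Real.sin q :ℝ):ℂ) * Complex.I := by
    rw [show ((a:ℝ):ℂ) * Complex.I * (y:ℝ) + (((x/a:ℝ)):ℂ) * Complex.I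
        = ((q:ℝ):ℂ) * Complex.I by rw [hqdef]; push_cast; field_simp; ring]
    rw [Complex.exp_mul_I, ← Complex.ofReal_cos, ← Complex.ofReal_sin]
  have hu' : (-(Real.sqrt 3*a/2))*y + (Real.sqrt 3*x/(2*a)) = u := by
    rw [hudef]; field_simp; ring
  rw [hdx, hdy, hEp, hEq, hEp', hEq', hu']
  have hr3 : Real.sqrt 3 ^ 2 = 3 := Real.sq_sqrt (by norm_num)
  have hr2 : Real.sqrt 2 ^ 2 = 2 := Real.sq_sqrt (by norm_num)
  have hp1 : Real.cos p ^ 2 + Real.sin p ^ 2 = 1 := Real.cos_sq_add_sin_sq p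
  have hq1 : Real.cos q ^ 2 + Real.sin q ^ 2 = 1 := Real.cos_sq_add_sin_sq q
  refine ⟨?_, ?_, ?_⟩
  · exact key_xx (1/(2*a)) (1 / Real.sqrt 3) (Real.sqrt 2) (Real.sqrt 3)
      (Real.cos p) (Real.sin p) (Real.cos q) (Real.sin q)
      (Real.cosh (Real.sqrt 3*(1/(2*a))*x + -(Real.sqrt 3*a^2*y/(2*a))))
      (Real.sinh (Real.sqrt 3*(1/(2*a))*x + -(Real.sqrt 3*a^2*y/(2*a))))
      hr3 hr2 hp1 hq1 (Real.cosh_sq_sub_sinh_sq _)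
  · exact key_yy a (1 / Real.sqrt 3) (Real.sqrt 2) (Real.sqrt 3)
      (Real.cos p) (Real.sin p) (Real.cos q) (Real.sin q)
      (Real.cosh u) (Real.sinh u)
      hr3 hr2 hp1 hq1 (Real.cosh_sq_sub_sinh_sq _)
  · exact key_xy a (1/(2*a)) (1 / Real.sqrt 3) (Real.sqrt 2) (Real.sqrt 3)
      (Real.cos p) (Real.sin p) (Real.cos q) (Real.sin q)
      (Real.cosh u) (Real.sinh u)
      hr3 hr2 (by field_simp)
      (one_div_mul_cancel (by positivity : Real.sqrt 3 ≠ 0))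
      hp1 hq1 (Real.cosh_sq_sub_sinh_sq _)
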